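/- Let V be a normed vector space over ℂ, let v₁, …, v_k ∈ V be linearly independent, let c₁, …, c_k ∈ ℂ, w₁, …, w_k ∈ ℂ, and ψ ∈ ℝ. For each j let g_j : (0, ∞) → V satisfy g_j(r) → 0 as r → 0⁺. If there exist B > 0 and δ₀ > 0 such that ‖∑_{j=1}^k c_j · exp(w_j / (r·exp(i·ψ))) · (v_j + g_j(r))‖ ≤ B for all r ∈ (0, δ₀), then c_j = 0 for every index j with Re(exp(−i·ψ)·w_j) > 0. -/

import Mathlib

open Filter Set Finset Topology

/-- Coefficients of a linearly independent family are controlled by the norm of the sum. -/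
lemma coeff_bound {V : Type*} [NormedAddCommGroup V] [NormedSpace ℂ V]
    {k : ℕ} {v : Fin k → V} (hv : LinearIndependent ℂ v) :
    ∃ C : ℝ, 0 < C ∧ ∀ (lam : Fin k → ℂ) (j : Fin k),
      ‖lam j‖ ≤ C * ‖∑ i, lam i • v i‖ := by
  haveI : FiniteDimensional ℂ (Submodule.span ℂ (Set.range v)) :=
    FiniteDimensional.span_of_finite ℂ (Set.finite_range v)
  set b := Module.Basis.span hv with hb
  let φ : Fin k → (Submodule.span ℂ (Set.range v)) →L[ℂ] ℂ :=
    fun j => LinearMap.toContinuousLinearMap (b.coord j)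
  refine ⟨1 + ∑ j, ‖φ j‖, by positivity, fun lam j => ?_⟩
  have hmem : (∑ i, lam i • v i) ∈ Submodule.span ℂ (Set.range v) :=
    Submodule.sum_mem _ fun i _ => Submodule.smul_mem _ _
      (Submodule.subset_span (Set.mem_range_self i))
  set x : Submodule.span ℂ (Set.range v) := ⟨∑ i, lam i • v i, hmem⟩ with hxdef
  have hx : x = ∑ i, lam i • b i := by
    apply Subtype.ext
    simp [hxdef, hb, Module.Basis.span_apply]
  have hrepr : b.repr x j = lam j := by
    rw [hx]
    simp [Finsupp.single_apply]
  have h1 : ‖lam j‖ = ‖φ j x‖ := by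
    simp [φ, Module.Basis.coord_apply, hrepr]
  have h2 : ‖φ j x‖ ≤ ‖φ j‖ * ‖x‖ := (φ j).le_opNorm x
  have h3 : ‖x‖ = ‖∑ i, lam i • v i‖ := rfl
  have h4 : ‖φ j‖ ≤ 1 + ∑ i, ‖φ i‖ := by
    have := Finset.single_le_sum (f := fun i => ‖φ i‖)
      (fun i _ => norm_nonneg (φ i)) (Finset.mem_univ j)
    linarith
  calc ‖lam j‖ = ‖φ j x‖ := h1
    _ ≤ ‖φ j‖ * ‖x‖ := h2
    _ ≤ (1 + ∑ i, ‖φ i‖) * ‖x‖ :=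
        mul_le_mul_of_nonneg_right h4 (norm_nonneg _)
    _ = (1 + ∑ i, ‖φ i‖) * ‖∑ i, lam i • v i‖ := by rw [h3]

/-- If a finite sum `∑ c_j · exp(w_j / (r·e^{iψ})) · (v_j + g_j(r))`
(with `v_j` linearly independent and `g_j(r) → 0` as `r → 0⁺`) stays bounded for
`r ∈ (0, δ₀)`, then `c_j = 0` for every `j` with `Re(e^{-iψ} w_j) > 0`. -/
theorem stmt_1 {V : Type*} [NormedAddCommGroup V] [NormedSpace ℂ V]
    {k : ℕ} {v : Fin k → V} (hv : LinearIndependent ℂ v)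
    (c w : Fin k → ℂ) (ψ : ℝ) (g : Fin k → ℝ → V)
    (hg : ∀ j, Filter.Tendsto (g j) (nhdsWithin 0 (Set.Ioi 0)) (nhds 0))
    (B δ₀ : ℝ) (hB : 0 < B) (hδ₀ : 0 < δ₀)
    (hbound : ∀ r ∈ Set.Ioo (0 : ℝ) δ₀,
      ‖∑ j, (c j * Complex.exp (w j / ((r : ℂ) * Complex.exp (Complex.I * (ψ : ℂ)))))
        • (v j + g j r)‖ ≤ B) :
    ∀ j, 0 < (Complex.exp (-Complex.I * (ψ : ℂ)) * w j).re → c j = 0 := by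
  intro j₀ hj₀
  by_contra hc0
  set l : Filter ℝ := nhdsWithin 0 (Set.Ioi 0) with hl
  set u : Fin k → ℂ := fun j => Complex.exp (-Complex.I * (ψ : ℂ)) * w j with hu
  set a : Fin k → ℝ := fun j => (u j).re with ha
  have hj₀a : 0 < a j₀ := hj₀
  set S := Finset.univ.filter (fun j : Fin k => c j ≠ 0) with hSdef
  have hj₀S : j₀ ∈ S := by simp [hSdef, hc0]
  have hSne : S.Nonempty := ⟨j₀, hj₀S⟩
  set A : ℝ := S.sup' hSne a with hA
  obtain ⟨j₁, hj₁S, hj₁⟩ := S.exists_mem_eq_sup' hSne a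
  have hc1 : c j₁ ≠ 0 := by
    have := hj₁S; simpa [hSdef] using this
  have hApos : 0 < A := lt_of_lt_of_le hj₀a (Finset.le_sup' a hj₀S)
  have hAle : ∀ j ∈ S, a j ≤ A := fun j hj => Finset.le_sup' a hj
  -- rewrite the exponent along the ray
  have key : ∀ (r : ℝ), 0 < r → ∀ j,
      w j / ((r : ℂ) * Complex.exp (Complex.I * (ψ : ℂ))) = u j / r := by
    intro r hr j
    have hrc : (r : ℂ) ≠ 0 := by exact_mod_cast hr.ne'
    have he : Complex.exp (Complex.I * (ψ : ℂ)) ≠ 0 := Complex.exp_ne_zero _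
    have hprod : Complex.exp (-Complex.I * (ψ : ℂ)) * Complex.exp (Complex.I * (ψ : ℂ)) = 1 := by
      rw [← Complex.exp_add]
      ring_nf
      exact Complex.exp_zero
    rw [hu]
    field_simp
    ring_nf
    ring_nf at hprod
    linear_combination (-(w j)) * hprod
  -- coefficients after normalization
  set coeff : Fin k → ℝ → ℂ :=
    fun j r => c j * Complex.exp ((u j - (A : ℂ)) / (r : ℂ)) with hcoeff
  set P : ℝ → V := fun r => ∑ j, coeff j r • v j with hP
  set G : ℝ → V := fun r => ∑ j, coeff j r • g j r with hG
  -- real part of (u j - A)/r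
  have hre : ∀ (j : Fin k) (r : ℝ), ((u j - (A : ℂ)) / (r : ℂ)).re = (a j - A) / r := by
    intro j r
    rw [Complex.div_ofReal_re]
    simp [ha]
  have hnormcoeff : ∀ (j : Fin k) (r : ℝ),
      ‖coeff j r‖ = ‖c j‖ * Real.exp ((a j - A) / r) := by
    intro j r
    rw [hcoeff]
    simp only [norm_mul, Complex.norm_exp, hre]
  -- Step 1: P + G tends to 0
  have hPG : Tendsto (fun r => P r + G r) l (𝓝 0) := by
    have hbd : ∀ᶠ r in l, ‖P r + G r‖ ≤ Real.exp (-A / r) * B := by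
      rw [hl]
      filter_upwards [Ioo_mem_nhdsGT_of_mem (Set.left_mem_Ico.2 hδ₀)] with r hr
      have hr0 : 0 < r := hr.1
      have hrc : (r : ℂ) ≠ 0 := by exact_mod_cast hr0.ne'
      have heq : P r + G r = Complex.exp (-(A : ℂ) / (r : ℂ)) •
          ∑ j, (c j * Complex.exp (w j / ((r : ℂ) * Complex.exp (Complex.I * (ψ : ℂ)))))
            • (v j + g j r) := by
        rw [Finset.smul_sum]
        have : ∀ j : Fin k,
            Complex.exp (-(A : ℂ) / (r : ℂ)) •
              ((c j * Complex.exp (w j / ((r : ℂ) * Complex.exp (Complex.I * (ψ : ℂ)))))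
                • (v j + g j r)) = coeff j r • (v j + g j r) := by
          intro j
          rw [key r hr0 j, smul_smul, hcoeff]
          congr 1
          rw [mul_comm, mul_assoc, ← Complex.exp_add]
          congr 2
          field_simp
          ring
        rw [Finset.sum_congr rfl fun j _ => this j]
        simp [hP, hG, smul_add, Finset.sum_add_distrib]
      rw [heq, norm_smul]
      have hns : ‖Complex.exp (-(A : ℂ) / (r : ℂ))‖ = Real.exp (-A / r) := by
        rw [Complex.norm_exp]
        congr 1
        have : (-(A : ℂ) / (r : ℂ)) = (((-A / r : ℝ)) : ℂ) := by push_cast; ring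
        rw [this, Complex.ofReal_re]
      rw [hns]
      exact mul_le_mul_of_nonneg_left (hbound r hr) (Real.exp_nonneg _)
    have hg0 : Tendsto (fun r : ℝ => Real.exp (-A / r) * B) l (𝓝 0) := by
      have h1 : Tendsto (fun r : ℝ => r⁻¹) l atTop := tendsto_inv_nhdsGT_zero
      have h2 : Tendsto (fun r : ℝ => -A / r) l atBot := by
        have := h1.const_mul_atTop hApos
        have h3 : Tendsto (fun r : ℝ => -(A * r⁻¹)) l atBot := tendsto_neg_atBot_iff.2 this
        refine h3.congr fun r => by ring
      have h4 : Tendsto (fun r : ℝ => Real.exp (-A / r)) l (𝓝 0) :=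
        Real.tendsto_exp_atBot.comp h2
      simpa using h4.mul_const B
    exact squeeze_zero_norm' hbd hg0
  -- Step 2: G tends to 0
  have hGz : Tendsto G l (𝓝 0) := by
    have hbd : ∀ᶠ r in l, ‖G r‖ ≤ ∑ j, ‖c j‖ * ‖g j r‖ := by
      rw [hl]
      filter_upwards [self_mem_nhdsWithin] with r hr
      have hr0 : (0 : ℝ) < r := hr
      rw [hG]
      refine le_trans (norm_sum_le _ _) (Finset.sum_le_sum fun j _ => ?_)
      rw [norm_smul, hnormcoeff]
      rcases eq_or_ne (c j) 0 with h | h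
      · simp [h]
      · have hjS : j ∈ S := by simp [hSdef, h]
        have : Real.exp ((a j - A) / r) ≤ 1 := by
          apply Real.exp_le_one_iff.2
          apply div_nonpos_of_nonpos_of_nonneg
          · linarith [hAle j hjS]
          · exact hr0.le
        have hcn : ‖c j‖ * Real.exp ((a j - A) / r) ≤ ‖c j‖ * 1 :=
          mul_le_mul_of_nonneg_left this (norm_nonneg _)
        calc ‖c j‖ * Real.exp ((a j - A) / r) * ‖g j r‖
            ≤ (‖c j‖ * 1) * ‖g j r‖ := mul_le_mul_of_nonneg_right hcn (norm_nonneg _)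
          _ = ‖c j‖ * ‖g j r‖ := by ring
    have hg0 : Tendsto (fun r => ∑ j, ‖c j‖ * ‖g j r‖) l (𝓝 0) := by
      have : Tendsto (fun r => ∑ j, ‖c j‖ * ‖g j r‖) l (𝓝 (∑ j : Fin k, ‖c j‖ * 0)) := by
        refine tendsto_finset_sum _ fun j _ => ?_
        simpa using (((hg j).norm).const_mul ‖c j‖)
      simpa using this
    exact squeeze_zero_norm' hbd hg0
  -- Step 3: P tends to 0
  have hPz : Tendsto P l (𝓝 0) := by
    have := hPG.sub hGz
    simpa using this
  -- Step 4: coefficient bound gives contradiction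
  obtain ⟨C, hCpos, hC⟩ := coeff_bound hv
  have hev : ∀ᶠ r in l, ‖c j₁‖ ≤ C * ‖P r‖ := by
    rw [hl]
    filter_upwards [self_mem_nhdsWithin] with r hr
    have : ‖coeff j₁ r‖ = ‖c j₁‖ := by
      rw [hnormcoeff]
      have : a j₁ - A = 0 := by rw [hA, hj₁]; ring
      rw [this]
      simp
    calc ‖c j₁‖ = ‖coeff j₁ r‖ := this.symm
      _ ≤ C * ‖∑ i, coeff i r • v i‖ := hC (fun i => coeff i r) j₁
      _ = C * ‖P r‖ := by rw [hP]
  have hlim : Tendsto (fun r => C * ‖P r‖) l (𝓝 0) := by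
    have := (hPz.norm).const_mul C
    simpa using this
  haveI : l.NeBot := by rw [hl]; infer_instance
  have : ‖c j₁‖ ≤ 0 := ge_of_tendsto hlim hev
  exact hc1 (norm_le_zero_iff.1 this)
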